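/- Let 𝒜 be a finite list in Γ, G a torsion-wise finite divisible abelian group (the multiplication-by-k map is surjective on G for every k ≥ 1). Suppose 𝒮 ⊂ 𝒯 ⊂ 𝒜 with 𝒯 = 𝒮 ⊔ ℬ ⊔ 𝒞 such that for all 𝒮 ⊂ ℛ ⊂ 𝒯, r_ℛ = r_𝒮 + #(ℛ ∩ ℬ). Then m(𝒮; G) · m(𝒯; G) = m(𝒮 ⊔ ℬ; G) · m(𝒮 ⊔ 𝒞; G). -/

import Mathlib

def TorsionwiseFinite (G : Type*) [AddCommGroup G] : Prop :=
  ∀ d : ℕ, 0 < d → Finite {x : G // d • x = 0}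

noncomputable def rk (Γ : Type*) [AddCommGroup Γ] (X : Set Γ) : ℕ :=
  Module.finrank ℤ (AddSubgroup.closure X)

noncomputable def mult (Γ : Type*) [AddCommGroup Γ] (G : Type*) [AddCommGroup G]
    (X : Set Γ) : ℕ :=
  Nat.card ((AddCommGroup.torsion (Γ ⧸ AddSubgroup.closure X)) →+ G)

/-! ### Auxiliary results: divisible groups and counting homomorphisms -/

section Divisible

variable {G : Type*} [AddCommGroup G]

theorem Ax3.zdiv (hdiv : ∀ k : ℕ, 0 < k → Function.Surjective (fun g : G => k • g)) :
    ∀ n : ℤ, n ≠ 0 → Function.Surjective (fun g : G => n • g) := by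
  intro n hn g
  obtain ⟨h, hh⟩ := hdiv n.natAbs (Int.natAbs_pos.mpr hn) g
  simp only at hh
  rcases Int.natAbs_eq n with h' | h'
  · refine ⟨h, ?_⟩
    show n • h = g
    rw [h', natCast_zsmul, hh]
  · refine ⟨-h, ?_⟩
    show n • (-h) = g
    rw [h', neg_smul, smul_neg, neg_neg, natCast_zsmul, hh]

theorem Ax3.baer_of_div (hdiv : ∀ k : ℕ, 0 < k → Function.Surjective (fun g : G => k • g)) :
    Module.Baer ℤ G := by
  intro I g
  obtain ⟨n, rfl⟩ : ∃ n : ℤ, I = Ideal.span {n} :=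
    ⟨_, (Ideal.span_singleton_generator I).symm⟩
  rcases eq_or_ne n 0 with rfl | hn
  · refine ⟨0, fun x hx => ?_⟩
    have hx0 : x = 0 := by simpa [Ideal.span_singleton_eq_bot.mpr rfl] using hx
    subst hx0
    have : (⟨0, hx⟩ : Ideal.span ({0} : Set ℤ)) = 0 := rfl
    rw [this, map_zero, map_zero]
  · obtain ⟨h, hh⟩ := Ax3.zdiv hdiv n hn (g ⟨n, Ideal.subset_span rfl⟩)
    simp only at hh
    refine ⟨LinearMap.toSpanSingleton ℤ G h, fun x hx => ?_⟩
    obtain ⟨c, rfl⟩ := Ideal.mem_span_singleton'.mp hx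
    have : (⟨c * n, hx⟩ : Ideal.span {n}) = c • ⟨n, Ideal.subset_span rfl⟩ := by
      ext; simp
    rw [this, map_smul, ← hh, LinearMap.toSpanSingleton_apply, mul_smul, smul_comm]

theorem Ax3.hom_ext_of_div (hdiv : ∀ k : ℕ, 0 < k → Function.Surjective (fun g : G => k • g))
    {A B : Type*} [AddCommGroup A] [AddCommGroup B] (i : A →+ B) (hi : Function.Injective i)
    (f : A →+ G) : ∃ g' : B →+ G, g'.comp i = f :=
  (Ax3.baer_of_div hdiv).extension_property_addMonoidHom i hi f

/-- homs from a quotient correspond to homs vanishing on the subgroup -/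
noncomputable def Ax3.quotHomEquiv {B : Type*} [AddCommGroup B] (A : AddSubgroup B)
    (res : (B →+ G) →+ (A →+ G))
    (hres : ∀ f : B →+ G, res f = f.comp A.subtype) :
    (B ⧸ A →+ G) ≃ res.ker where
  toFun g := ⟨g.comp (QuotientAddGroup.mk' A), by
    rw [AddMonoidHom.mem_ker, hres]
    ext a
    simp [(QuotientAddGroup.eq_zero_iff (a : B)).mpr a.2]⟩
  invFun f := QuotientAddGroup.lift A f.1 (by
    intro a ha
    have := f.2
    rw [AddMonoidHom.mem_ker, hres] at this
    simpa using congrFun (congrArg (fun h : A →+ G => (h : A → G)) this) ⟨a, ha⟩)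
  left_inv g := by
    ext x
    simp
  right_inv f := by
    ext b
    simp

theorem Ax3.card_hom_eq_mul
    (hdiv : ∀ k : ℕ, 0 < k → Function.Surjective (fun g : G => k • g))
    {B : Type*} [AddCommGroup B] (A : AddSubgroup B) :
    Nat.card (B →+ G) = Nat.card (A →+ G) * Nat.card (B ⧸ A →+ G) := by
  classical
  let res : (B →+ G) →+ (A →+ G) :=
    { toFun := fun f => f.comp A.subtype
      map_zero' := rfl
      map_add' := fun f g => rfl }
  have hres : ∀ f : B →+ G, res f = f.comp A.subtype := fun _ => rfl
  have hsurj : Function.Surjective res := by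
    intro f
    obtain ⟨g', hg'⟩ := Ax3.hom_ext_of_div hdiv A.subtype Subtype.val_injective f
    exact ⟨g', hg'⟩
  have e1 : ((B →+ G) ⧸ res.ker) ≃+ (A →+ G) :=
    QuotientAddGroup.quotientKerEquivOfSurjective res hsurj
  have e2 : (B ⧸ A →+ G) ≃ res.ker := Ax3.quotHomEquiv A res hres
  rw [AddSubgroup.card_eq_card_quotient_mul_card_addSubgroup res.ker,
    Nat.card_congr e1.toEquiv, Nat.card_congr e2, mul_comm]

theorem Ax3.card_hom_congr {A B : Type*} [AddCommGroup A] [AddCommGroup B] (e : A ≃+ B) :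
    Nat.card (A →+ G) = Nat.card (B →+ G) :=
  Nat.card_congr
    ⟨fun f => f.comp e.symm.toAddMonoidHom, fun f => f.comp e.toAddMonoidHom,
      fun f => by ext a; simp, fun f => by ext b; simp⟩

end Divisible

/-! ### Auxiliary results: ranks of finitely generated `ℤ`-modules -/

section RankLemmas

open Module

variable {Γ : Type*} [AddCommGroup Γ]

theorem Ax3.finrank_map_mkQ_add (N M : Submodule ℤ Γ) (h : N ≤ M) [Module.Finite ℤ M] :
    finrank ℤ (M.map N.mkQ) + finrank ℤ N = finrank ℤ M := by
  let f : M →ₗ[ℤ] Γ ⧸ N := N.mkQ ∘ₗ M.subtype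
  have hker : LinearMap.ker f = Submodule.comap M.subtype N := by
    rw [LinearMap.ker_comp, Submodule.ker_mkQ]
  have hrange : LinearMap.range f = M.map N.mkQ := by
    rw [LinearMap.range_comp, Submodule.range_subtype]
  have h1 := Submodule.finrank_quotient_add_finrank (LinearMap.ker f)
  have h2 : finrank ℤ (M ⧸ LinearMap.ker f) = finrank ℤ (M.map N.mkQ) := by
    rw [← hrange]; exact LinearEquiv.finrank_eq f.quotKerEquivRange
  have h3 : finrank ℤ (LinearMap.ker f) = finrank ℤ N := by
    rw [hker]; exact LinearEquiv.finrank_eq (Submodule.comapSubtypeEquivOfLe h)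
  omega

theorem Ax3.exists_nsmul_mem_of_finrank_eq [Module.Finite ℤ Γ] (N M : Submodule ℤ Γ)
    (h : N ≤ M) (hrk : finrank ℤ N = finrank ℤ M) :
    ∀ x ∈ M, ∃ n : ℕ, 0 < n ∧ (n : ℤ) • x ∈ N := by
  haveI : IsNoetherian ℤ Γ := isNoetherian_of_isNoetherianRing_of_finite ℤ Γ
  have h0 : finrank ℤ (M.map N.mkQ) = 0 := by
    have := Ax3.finrank_map_mkQ_add N M h; omega
  have htor := Module.finrank_eq_zero_iff.mp h0
  intro x hx
  obtain ⟨a, ha, ha0⟩ := htor ⟨N.mkQ x, Submodule.mem_map_of_mem hx⟩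
  have : a • x ∈ N := by
    have : a • N.mkQ x = 0 := congrArg Subtype.val ha0
    rwa [← map_smul, Submodule.mkQ_apply, Submodule.Quotient.mk_eq_zero] at this
  refine ⟨a.natAbs, Int.natAbs_pos.mpr ha, ?_⟩
  rcases Int.natAbs_eq a with h' | h'
  · rwa [← h']
  · rw [← neg_neg ((a.natAbs : ℤ) • x), ← neg_smul, ← h']
    exact N.neg_mem this

theorem Ax3.mem_of_nsmul_mem [Module.Finite ℤ Γ] (N M : Submodule ℤ Γ) {ι : Type*} [Fintype ι]
    (v : ι → Γ) (hM : M = N ⊔ Submodule.span ℤ (Set.range v))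
    (hrk : finrank ℤ M = finrank ℤ N + Fintype.card ι) :
    ∀ x ∈ M, ∀ n : ℕ, 0 < n → (n : ℤ) • x ∈ N → x ∈ N := by
  haveI : IsNoetherian ℤ Γ := isNoetherian_of_isNoetherianRing_of_finite ℤ Γ
  have hNM : N ≤ M := hM ▸ le_sup_left
  have hmapN : N.map N.mkQ = ⊥ := by
    rw [eq_bot_iff]
    rintro y ⟨x, hx, rfl⟩
    simpa [Submodule.mkQ_apply, Submodule.Quotient.mk_eq_zero] using hx
  have hW : M.map N.mkQ = Submodule.span ℤ (Set.range (N.mkQ ∘ v)) := by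
    rw [hM, Submodule.map_sup, hmapN, bot_sup_eq, Submodule.map_span, ← Set.range_comp]
  have h1 : finrank ℤ (M.map N.mkQ) = Fintype.card ι := by
    have := Ax3.finrank_map_mkQ_add N M hNM; omega
  let f : (ι →₀ ℤ) →ₗ[ℤ] Γ ⧸ N := Finsupp.linearCombination ℤ (fun i => N.mkQ (v i))
  have hrange : LinearMap.range f = M.map N.mkQ := by
    rw [Finsupp.range_linearCombination, hW]
    rfl
  have hfs : Module.Finite ℤ (ι →₀ ℤ) :=
    Module.Finite.equiv (Finsupp.linearEquivFunOnFinite ℤ ℤ ι).symm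
  have hker0 : finrank ℤ (LinearMap.ker f) = 0 := by
    have hq := Submodule.finrank_quotient_add_finrank (LinearMap.ker f)
    have h2 : finrank ℤ ((ι →₀ ℤ) ⧸ LinearMap.ker f) = Fintype.card ι := by
      rw [LinearEquiv.finrank_eq f.quotKerEquivRange, hrange, h1]
    have h3 : finrank ℤ (ι →₀ ℤ) = Fintype.card ι := finrank_finsupp_self ℤ
    omega
  have hnz : ∀ (a : ℤ) (c : ι →₀ ℤ), a ≠ 0 → a • c = 0 → c = 0 := by
    intro a c ha hc
    ext i
    have := congrFun (congrArg (fun g : ι →₀ ℤ => (g : ι → ℤ)) hc) i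
    simp only [Finsupp.coe_smul, Pi.smul_apply, smul_eq_mul, Finsupp.coe_zero,
      Pi.zero_apply] at this
    exact (mul_eq_zero.mp this).resolve_left ha
  have hinj : Function.Injective f := by
    rw [← LinearMap.ker_eq_bot, eq_bot_iff]
    intro c hc
    obtain ⟨a, ha, ha0⟩ := Module.finrank_eq_zero_iff.mp hker0 ⟨c, hc⟩
    have : a • c = 0 := congrArg Subtype.val ha0
    simpa using hnz a c ha this
  intro x hx n hn hnx
  have hxW : N.mkQ x ∈ LinearMap.range f := by rw [hrange]; exact Submodule.mem_map_of_mem hx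
  obtain ⟨c, hc⟩ := hxW
  have hfc : f ((n : ℤ) • c) = 0 := by
    rw [map_smul, hc, ← map_smul, Submodule.mkQ_apply, Submodule.Quotient.mk_eq_zero]
    exact hnx
  have hc0 : c = 0 := hnz (n : ℤ) c (Int.natCast_ne_zero.mpr hn.ne') (hinj (by simpa using hfc))
  rw [← Submodule.Quotient.mk_eq_zero, ← Submodule.mkQ_apply, ← hc, hc0, map_zero]

end RankLemmas

/-! ### Bridge between `AddSubgroup.closure` and `Submodule.span ℤ` -/

section Bridge

variable {Γ : Type*} [AddCommGroup Γ]

theorem Ax3.mem_closure_iff_mem_span (X : Set Γ) (x : Γ) :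
    x ∈ AddSubgroup.closure X ↔ x ∈ Submodule.span ℤ X := by
  rw [← Submodule.span_int_eq_addSubgroupClosure, Submodule.mem_toAddSubgroup]

noncomputable def Ax3.closureEquivSpan (X : Set Γ) :
    (AddSubgroup.closure X) ≃ₗ[ℤ] (Submodule.span ℤ X) where
  toFun x := ⟨x.1, (Ax3.mem_closure_iff_mem_span X x.1).mp x.2⟩
  invFun x := ⟨x.1, (Ax3.mem_closure_iff_mem_span X x.1).mpr x.2⟩
  map_add' x y := rfl
  map_smul' n x := by ext; simp
  left_inv x := rfl
  right_inv x := rfl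

theorem Ax3.rk_eq_finrank_span (X : Set Γ) :
    rk Γ X = Module.finrank ℤ (Submodule.span ℤ X) :=
  LinearEquiv.finrank_eq (Ax3.closureEquivSpan X)

end Bridge

/-! ### Maps between torsion subgroups of quotients -/

section Square

open AddCommGroup

variable {Γ : Type*} [AddCommGroup Γ]

theorem Ax3.mem_torsion_quot_iff (K : AddSubgroup Γ) (x : Γ) :
    ((x : Γ ⧸ K) ∈ torsion (Γ ⧸ K)) ↔ ∃ n : ℕ, 0 < n ∧ n • x ∈ K := by
  rw [AddCommGroup.mem_torsion, isOfFinAddOrder_iff_nsmul_eq_zero]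
  refine exists_congr fun n => and_congr_right fun hn => ?_
  rw [← QuotientAddGroup.eq_zero_iff]
  have : ((n • x : Γ) : Γ ⧸ K) = n • (x : Γ ⧸ K) := map_nsmul (QuotientAddGroup.mk' K) n x
  rw [this]

noncomputable def Ax3.tmap {K K' : AddSubgroup Γ} (h : K ≤ K') :
    torsion (Γ ⧸ K) →+ torsion (Γ ⧸ K') :=
  AddMonoidHom.codRestrict
    ((QuotientAddGroup.map K K' (AddMonoidHom.id Γ) h).domRestrict (torsion (Γ ⧸ K))) _
    (by
      rintro ⟨y, hy⟩
      obtain ⟨x, rfl⟩ := QuotientAddGroup.mk_surjective y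
      have hx := (Ax3.mem_torsion_quot_iff K x).mp hy
      exact (Ax3.mem_torsion_quot_iff K' x).mpr
        ⟨hx.choose, hx.choose_spec.1, h hx.choose_spec.2⟩)

theorem Ax3.tmap_coe {K K' : AddSubgroup Γ} (h : K ≤ K') (x : Γ) (hx) :
    ((Ax3.tmap h ⟨(x : Γ ⧸ K), hx⟩ : torsion (Γ ⧸ K')) : Γ ⧸ K') = (x : Γ ⧸ K') := rfl

theorem Ax3.tmap_coe' {K K' : AddSubgroup Γ} (h : K ≤ K') (t : torsion (Γ ⧸ K)) :
    ((Ax3.tmap h t : torsion (Γ ⧸ K')) : Γ ⧸ K') =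
      QuotientAddGroup.map K K' (AddMonoidHom.id Γ) h (t : Γ ⧸ K) := rfl

theorem Ax3.tmap_inj {K K' : AddSubgroup Γ} (h : K ≤ K')
    (ha : ∀ x ∈ K', (∃ n : ℕ, 0 < n ∧ n • x ∈ K) → x ∈ K) :
    Function.Injective (Ax3.tmap (Γ := Γ) h) := by
  rw [injective_iff_map_eq_zero]
  rintro ⟨y, hy⟩ h0
  obtain ⟨x, rfl⟩ := QuotientAddGroup.mk_surjective y
  have hval : ((x : Γ ⧸ K')) = 0 := congrArg Subtype.val h0
  have hx' : x ∈ K' := (QuotientAddGroup.eq_zero_iff x).mp hval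
  have hx : x ∈ K := ha x hx' ((Ax3.mem_torsion_quot_iff K x).mp hy)
  exact Subtype.ext ((QuotientAddGroup.eq_zero_iff x).mpr hx)

theorem Ax3.tmap_surj {K K' : AddSubgroup Γ} (h : K ≤ K')
    (hs : ∀ x : Γ, (∃ n : ℕ, 0 < n ∧ n • x ∈ K') → (∃ m : ℕ, 0 < m ∧ m • x ∈ K)) :
    Function.Surjective (Ax3.tmap (Γ := Γ) h) := by
  rintro ⟨y, hy⟩
  obtain ⟨x, rfl⟩ := QuotientAddGroup.mk_surjective y
  have hx := hs x ((Ax3.mem_torsion_quot_iff K' x).mp hy)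
  exact ⟨⟨(x : Γ ⧸ K), (Ax3.mem_torsion_quot_iff K x).mpr hx⟩, Subtype.ext rfl⟩

theorem Ax3.ker_eq_range {K₁ K₂ K₃ K₄ : AddSubgroup Γ}
    (h12 : K₁ ≤ K₂) (h13 : K₁ ≤ K₃) (h24 : K₂ ≤ K₄) (h34 : K₃ ≤ K₄)
    (hsup : K₄ = K₂ ⊔ K₃)
    (hc : ∀ x ∈ K₃, ∃ n : ℕ, 0 < n ∧ n • x ∈ K₁) :
    ((QuotientAddGroup.mk' (Ax3.tmap (Γ := Γ) h34).range).comp (Ax3.tmap h24)).ker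
      = (Ax3.tmap h12).range := by
  ext t
  rw [AddMonoidHom.mem_ker, AddMonoidHom.comp_apply, QuotientAddGroup.mk'_apply,
    QuotientAddGroup.eq_zero_iff]
  constructor
  · rintro ⟨s, hs⟩
    rcases t with ⟨yt, hyt⟩
    obtain ⟨x, rfl⟩ := QuotientAddGroup.mk_surjective yt
    rcases s with ⟨ys, hys⟩
    obtain ⟨y, rfl⟩ := QuotientAddGroup.mk_surjective ys
    have hval : (y : Γ ⧸ K₄) = (x : Γ ⧸ K₄) := by
      have := congrArg Subtype.val hs
      rwa [Ax3.tmap_coe, Ax3.tmap_coe] at this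
    have hxy : x - y ∈ K₄ := by
      have := (QuotientAddGroup.eq (s := K₄)).mp hval
      rwa [neg_add_eq_sub] at this
    rw [hsup] at hxy
    obtain ⟨p, hp, q, hq, hpq⟩ := AddSubgroup.mem_sup.mp hxy
    obtain ⟨n, hn, hny⟩ := (Ax3.mem_torsion_quot_iff K₃ y).mp hys
    obtain ⟨m, hm, hmny⟩ := hc (n • y) hny
    obtain ⟨l, hl, hlq⟩ := hc q hq
    have hz : (m * n * l) • (y + q) ∈ K₁ := by
      have e1 : (m * n * l) • (y + q) = l • (m • (n • y)) + (m * n) • (l • q) := by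
        rw [smul_add]
        congr 1
        · rw [← mul_nsmul, ← mul_nsmul]
          congr 1
          ring
        · rw [← mul_nsmul]
          congr 1
          ring
      rw [e1]
      exact K₁.add_mem (K₁.nsmul_mem hmny l) (K₁.nsmul_mem hlq (m * n))
    refine ⟨⟨((y + q : Γ) : Γ ⧸ K₁), (Ax3.mem_torsion_quot_iff K₁ (y + q)).mpr
      ⟨m * n * l, by positivity, hz⟩⟩, ?_⟩
    apply Subtype.ext
    rw [Ax3.tmap_coe]
    have hmem : -(y + q) + x ∈ K₂ := by
      have : -(y + q) + x = p := by rw [← sub_eq_iff_eq_add'.mpr hpq.symm]; abel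
      rw [this]; exact hp
    exact QuotientAddGroup.eq.mpr hmem
  · rintro ⟨s, rfl⟩
    rcases s with ⟨ys, hys⟩
    obtain ⟨y, rfl⟩ := QuotientAddGroup.mk_surjective ys
    refine ⟨Ax3.tmap h13 ⟨(y : Γ ⧸ K₁), hys⟩, Subtype.ext ?_⟩
    rw [Ax3.tmap_coe', Ax3.tmap_coe', Ax3.tmap_coe', Ax3.tmap_coe']
    simp only [QuotientAddGroup.map_mk, AddMonoidHom.id_apply]
    rfl

theorem Ax3.square_card {G : Type*} [AddCommGroup G]
    (hdiv : ∀ k : ℕ, 0 < k → Function.Surjective (fun g : G => k • g))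
    {K₁ K₂ K₃ K₄ : AddSubgroup Γ}
    (h12 : K₁ ≤ K₂) (h13 : K₁ ≤ K₃) (h34 : K₃ ≤ K₄) (hsup : K₄ = K₂ ⊔ K₃)
    (hc : ∀ x ∈ K₃, ∃ n : ℕ, 0 < n ∧ n • x ∈ K₁)
    (ha : ∀ x ∈ K₂, (∃ n : ℕ, 0 < n ∧ n • x ∈ K₁) → x ∈ K₁)
    (hb : ∀ x ∈ K₄, (∃ n : ℕ, 0 < n ∧ n • x ∈ K₃) → x ∈ K₃) :
    Nat.card (torsion (Γ ⧸ K₁) →+ G) * Nat.card (torsion (Γ ⧸ K₄) →+ G) =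
      Nat.card (torsion (Γ ⧸ K₂) →+ G) * Nat.card (torsion (Γ ⧸ K₃) →+ G) := by
  have h24 : K₂ ≤ K₄ := hsup ▸ le_sup_left
  have hsurj24 : ∀ x : Γ, (∃ n : ℕ, 0 < n ∧ n • x ∈ K₄) → ∃ m : ℕ, 0 < m ∧ m • x ∈ K₂ := by
    rintro x ⟨n, hn, hnx⟩
    rw [hsup] at hnx
    obtain ⟨p, hp, q, hq, hpq⟩ := AddSubgroup.mem_sup.mp hnx
    obtain ⟨l, hl, hlq⟩ := hc q hq
    refine ⟨l * n, by positivity, ?_⟩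
    have : (l * n) • x = l • p + l • q := by
      rw [mul_comm, mul_nsmul, ← hpq, smul_add]
    rw [this]
    exact K₂.add_mem (K₂.nsmul_mem hp l) (h12 hlq)
  have inj12 := Ax3.tmap_inj h12 ha
  have inj34 := Ax3.tmap_inj h34 hb
  have surj24 := Ax3.tmap_surj h24 hsurj24
  set ψ := (QuotientAddGroup.mk' (Ax3.tmap (Γ := Γ) h34).range).comp (Ax3.tmap h24) with hψ
  have surjψ : Function.Surjective ψ :=
    (QuotientAddGroup.mk'_surjective _).comp surj24
  have hker := Ax3.ker_eq_range h12 h13 h24 h34 hsup hc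
  have e : (torsion (Γ ⧸ K₂) ⧸ (Ax3.tmap (Γ := Γ) h12).range) ≃+
      (torsion (Γ ⧸ K₄) ⧸ (Ax3.tmap (Γ := Γ) h34).range) :=
    (QuotientAddGroup.quotientAddEquivOfEq hker.symm).trans
      (QuotientAddGroup.quotientKerEquivOfSurjective ψ surjψ)
  have c2 := Ax3.card_hom_eq_mul (G := G) hdiv (Ax3.tmap (Γ := Γ) h12).range
  have c4 := Ax3.card_hom_eq_mul (G := G) hdiv (Ax3.tmap (Γ := Γ) h34).range
  have er1 : Nat.card ((Ax3.tmap (Γ := Γ) h12).range →+ G) =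
      Nat.card (torsion (Γ ⧸ K₁) →+ G) :=
    Ax3.card_hom_congr (AddMonoidHom.ofInjective inj12).symm
  have er3 : Nat.card ((Ax3.tmap (Γ := Γ) h34).range →+ G) =
      Nat.card (torsion (Γ ⧸ K₃) →+ G) :=
    Ax3.card_hom_congr (AddMonoidHom.ofInjective inj34).symm
  have qeq : Nat.card ((torsion (Γ ⧸ K₂) ⧸ (Ax3.tmap (Γ := Γ) h12).range) →+ G) =
      Nat.card ((torsion (Γ ⧸ K₄) ⧸ (Ax3.tmap (Γ := Γ) h34).range) →+ G) :=
    Ax3.card_hom_congr e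
  rw [c2, c4, er1, er3, qeq]
  ring

end Square

/-- Axiom (3) for `G`-multiplicities when `G` is torsion-wise finite and divisible:
if `𝒯 = 𝒮 ⊔ ℬ ⊔ 𝒞` and `r_ℛ = r_𝒮 + #(ℛ ∩ ℬ)` for all `𝒮 ⊆ ℛ ⊆ 𝒯`, then
`m(𝒮;G)·m(𝒯;G) = m(𝒮⊔ℬ;G)·m(𝒮⊔𝒞;G)`. -/
theorem axiom3_divisible {ι Γ : Type*} [DecidableEq ι] [AddCommGroup Γ] [AddGroup.FG Γ]
    (G : Type*) [AddCommGroup G] (hG : TorsionwiseFinite G)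
    (hdiv : ∀ k : ℕ, 0 < k → Function.Surjective (fun g : G => k • g))
    (a : ι → Γ) (S B C : Finset ι)
    (hSB : Disjoint S B) (hSC : Disjoint S C) (hBC : Disjoint B C)
    (hr : ∀ R : Finset ι, S ⊆ R → R ⊆ S ∪ B ∪ C →
      rk Γ (a '' (R : Set ι)) = rk Γ (a '' (S : Set ι)) + (R ∩ B).card) :
    mult Γ G (a '' (S : Set ι)) * mult Γ G (a '' ((S ∪ B ∪ C : Finset ι) : Set ι)) =
      mult Γ G (a '' ((S ∪ B : Finset ι) : Set ι)) *
        mult Γ G (a '' ((S ∪ C : Finset ι) : Set ι)) := by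
  classical
  haveI : Module.Finite ℤ Γ := Module.Finite.iff_addGroup_fg.mpr inferInstance
  set X₁ : Set Γ := a '' (S : Set ι) with hX1
  set X₂ : Set Γ := a '' ((S ∪ B : Finset ι) : Set ι) with hX2
  set X₃ : Set Γ := a '' ((S ∪ C : Finset ι) : Set ι) with hX3
  set X₄ : Set Γ := a '' ((S ∪ B ∪ C : Finset ι) : Set ι) with hX4
  set N₁ := Submodule.span ℤ X₁ with hN1
  set N₂ := Submodule.span ℤ X₂ with hN2
  set N₃ := Submodule.span ℤ X₃ with hN3
  set N₄ := Submodule.span ℤ X₄ with hN4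
  -- subset relations
  have hs12 : X₁ ⊆ X₂ := Set.image_mono (f := a) (by
    simp only [Finset.coe_subset]; exact Finset.subset_union_left)
  have hs13 : X₁ ⊆ X₃ := Set.image_mono (f := a) (by
    simp only [Finset.coe_subset]; exact Finset.subset_union_left)
  have hs34 : X₃ ⊆ X₄ := Set.image_mono (f := a) (by
    intro x hx
    simp only [Finset.coe_union, Set.mem_union] at hx ⊢
    tauto)
  -- rank facts
  have hrB : rk Γ X₂ = rk Γ X₁ + B.card := by
    have h0 := hr (S ∪ B) Finset.subset_union_left Finset.subset_union_left
    rwa [Finset.inter_eq_right.mpr Finset.subset_union_right] at h0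
  have hrC : rk Γ X₃ = rk Γ X₁ := by
    have h0 := hr (S ∪ C) Finset.subset_union_left (by intro x hx; simp at hx ⊢; tauto)
    have hdisj : Disjoint (S ∪ C) B := by
      rw [Finset.disjoint_union_left]
      exact ⟨hSB, hBC.symm⟩
    rw [Finset.disjoint_iff_inter_eq_empty.mp hdisj, Finset.card_empty, add_zero] at h0
    exact h0
  have hrT : rk Γ X₄ = rk Γ X₁ + B.card := by
    have h0 := hr (S ∪ B ∪ C)
      (Finset.subset_union_left.trans Finset.subset_union_left) (le_refl _)
    rwa [Finset.inter_eq_right.mpr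
      (Finset.subset_union_right.trans Finset.subset_union_left)] at h0
  -- the generating family for B
  set v : {x : ι // x ∈ B} → Γ := fun b => a b.1 with hv
  have hrangev : Set.range v = a '' (B : Set ι) := by
    ext y
    constructor
    · rintro ⟨⟨b, hb⟩, rfl⟩
      exact ⟨b, hb, rfl⟩
    · rintro ⟨b, hb, rfl⟩
      exact ⟨⟨b, hb⟩, rfl⟩
  have hcardv : Fintype.card {x : ι // x ∈ B} = B.card := Fintype.card_coe B
  -- span decompositions
  have hM2 : N₂ = N₁ ⊔ Submodule.span ℤ (Set.range v) := by
    rw [hN2, hN1, hX2, hX1, hrangev, ← Submodule.span_union, ← Set.image_union,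
      ← Finset.coe_union]
  have hbc4 : S ∪ B ∪ C = (S ∪ C) ∪ B := by
    ext x
    simp only [Finset.mem_union]
    tauto
  have hM4 : N₄ = N₃ ⊔ Submodule.span ℤ (Set.range v) := by
    rw [hN4, hN3, hX4, hX3, hrangev, ← Submodule.span_union, ← Set.image_union,
      ← Finset.coe_union, hbc4]
  -- finrank facts
  have hfr2 : Module.finrank ℤ N₂ = Module.finrank ℤ N₁ + Fintype.card {x : ι // x ∈ B} := by
    rw [hN1, hN2, ← Ax3.rk_eq_finrank_span, ← Ax3.rk_eq_finrank_span, hcardv]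
    exact hrB
  have hfr3 : Module.finrank ℤ N₁ = Module.finrank ℤ N₃ := by
    rw [hN1, hN3, ← Ax3.rk_eq_finrank_span, ← Ax3.rk_eq_finrank_span]
    exact hrC.symm
  have hfr4 : Module.finrank ℤ N₄ = Module.finrank ℤ N₃ + Fintype.card {x : ι // x ∈ B} := by
    rw [hN3, hN4, ← Ax3.rk_eq_finrank_span, ← Ax3.rk_eq_finrank_span, hcardv, hrC, hrT]
  -- the three element-level conditions
  have hc : ∀ x ∈ AddSubgroup.closure X₃, ∃ n : ℕ, 0 < n ∧ n • x ∈ AddSubgroup.closure X₁ := by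
    intro x hx
    obtain ⟨n, hn, hnx⟩ := Ax3.exists_nsmul_mem_of_finrank_eq N₁ N₃
      (Submodule.span_mono hs13) hfr3 x ((Ax3.mem_closure_iff_mem_span X₃ x).mp hx)
    refine ⟨n, hn, (Ax3.mem_closure_iff_mem_span X₁ _).mpr ?_⟩
    rwa [natCast_zsmul] at hnx
  have ha : ∀ x ∈ AddSubgroup.closure X₂,
      (∃ n : ℕ, 0 < n ∧ n • x ∈ AddSubgroup.closure X₁) → x ∈ AddSubgroup.closure X₁ := by
    rintro x hx ⟨n, hn, hnx⟩
    refine (Ax3.mem_closure_iff_mem_span X₁ x).mpr ?_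
    refine Ax3.mem_of_nsmul_mem N₁ N₂ v hM2 hfr2 x
      ((Ax3.mem_closure_iff_mem_span X₂ x).mp hx) n hn ?_
    rw [natCast_zsmul]
    exact (Ax3.mem_closure_iff_mem_span X₁ _).mp hnx
  have hb : ∀ x ∈ AddSubgroup.closure X₄,
      (∃ n : ℕ, 0 < n ∧ n • x ∈ AddSubgroup.closure X₃) → x ∈ AddSubgroup.closure X₃ := by
    rintro x hx ⟨n, hn, hnx⟩
    refine (Ax3.mem_closure_iff_mem_span X₃ x).mpr ?_
    refine Ax3.mem_of_nsmul_mem N₃ N₄ v hM4 hfr4 x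
      ((Ax3.mem_closure_iff_mem_span X₄ x).mp hx) n hn ?_
    rw [natCast_zsmul]
    exact (Ax3.mem_closure_iff_mem_span X₃ _).mp hnx
  -- closure sup decomposition
  have hsup4 : S ∪ B ∪ C = (S ∪ B) ∪ (S ∪ C) := by
    ext x
    simp only [Finset.mem_union]
    tauto
  have hsup : AddSubgroup.closure X₄ = AddSubgroup.closure X₂ ⊔ AddSubgroup.closure X₃ := by
    rw [← AddSubgroup.closure_union, hX2, hX3, hX4, ← Set.image_union, ← Finset.coe_union,
      hsup4]
  exact Ax3.square_card hdiv (AddSubgroup.closure_mono hs12) (AddSubgroup.closure_mono hs13)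
    (AddSubgroup.closure_mono hs34) hsup hc ha hb
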